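/- Let α and γ be nonempty finite types and let ρ be a positive semidefinite complex matrix indexed by α × γ with Tr(ρ) = 1. Suppose the partial trace of ρ over γ, the matrix (Tr_γ ρ)(m, n) = ∑_{c} ρ((m,c),(n,c)) indexed by α, equals ψ ψ† (i.e. Matrix.vecMulVec ψ (star ψ)) for some vector ψ ∈ ℂ^α with ∑_m ψ(m)·conj(ψ(m)) = 1. Then for all m, n ∈ α and c, c' ∈ γ, ρ((m,c),(n,c')) = ψ(m)·conj(ψ(n))·σ(c,c'), where σ(c,c') = ∑_{m} ρ((m,c),(m,c')) is the partial trace of ρ over α. -/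

import Mathlib

open Matrix
open scoped ComplexOrder

/-- If a bipartite density matrix `ρ` on `α × γ` has a pure marginal `ψψ†` on `α`, then it
factorizes as `ρ((m,c),(n,c')) = ψ(m)·conj(ψ(n))·σ(c,c')` where `σ` is the marginal on `γ`. -/
theorem pure_marginal_factorizes {α γ : Type*} [Fintype α] [Fintype γ]
    [Nonempty α] [Nonempty γ] [DecidableEq α] [DecidableEq γ]
    (ρ : Matrix (α × γ) (α × γ) ℂ) (hρ : ρ.PosSemidef) (htr : ρ.trace = 1)
    (ψ : α → ℂ) (hψ : ∑ m, ψ m * (starRingEnd ℂ) (ψ m) = 1)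
    (hmarg : (Matrix.of fun m n => ∑ c, ρ (m, c) (n, c)) = Matrix.vecMulVec ψ (star ψ)) :
    ∀ (m n : α) (c c' : γ),
      ρ (m, c) (n, c') = ψ m * (starRingEnd ℂ) (ψ n) * ∑ m', ρ (m', c) (m', c') := by
  have hmarg' : ∀ m n : α, ∑ c, ρ (m, c) (n, c) = ψ m * (starRingEnd ℂ) (ψ n) := by
    intro m n
    have := congrFun (congrFun hmarg m) n
    simpa [Matrix.vecMulVec_apply] using this
  set φ : α → α → ℂ :=
    fun m a => (if a = m then 1 else 0) - (starRingEnd ℂ) (ψ m) * ψ a with hφ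
  set v : α → γ → (α × γ) → ℂ :=
    fun m c p => φ m p.1 * (if p.2 = c then 1 else 0) with hv
  -- orthogonality of φ m and ψ
  have horth : ∀ m, ∑ a, φ m a * (starRingEnd ℂ) (ψ a) = 0 := by
    intro m
    have h1 : ∀ a, φ m a * (starRingEnd ℂ) (ψ a)
        = (if a = m then (starRingEnd ℂ) (ψ a) else 0)
          - (starRingEnd ℂ) (ψ m) * (ψ a * (starRingEnd ℂ) (ψ a)) := by
      intro a; simp only [hφ]; split <;> ring
    rw [Finset.sum_congr rfl fun a _ => h1 a, Finset.sum_sub_distrib,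
      Finset.sum_ite_eq' Finset.univ m, ← Finset.mul_sum, hψ]
    simp
  -- expand the quadratic form on v m c
  have expand : ∀ m c, star (v m c) ⬝ᵥ ρ *ᵥ (v m c)
      = ∑ a, ∑ a', (starRingEnd ℂ) (φ m a) * (φ m a' * ρ (a, c) (a', c)) := by
    intro m c
    simp only [dotProduct, mulVec, hv, Fintype.sum_prod_type, Pi.star_apply, star_mul',
      apply_ite (star : ℂ → ℂ), star_one, star_zero, ite_mul, mul_ite, mul_zero, zero_mul,
      Finset.sum_ite_eq, Finset.sum_ite_eq', Finset.mem_univ, if_true, RCLike.star_def]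
    refine Finset.sum_congr rfl fun a _ => ?_
    rw [mul_one, Finset.mul_sum]
    refine Finset.sum_congr rfl fun a' _ => by ring
  -- the quadratic forms sum to zero over c
  have hsum : ∀ m : α, ∑ c, star (v m c) ⬝ᵥ ρ *ᵥ (v m c) = 0 := by
    intro m
    have e1 : ∑ c, star (v m c) ⬝ᵥ ρ *ᵥ (v m c)
        = ∑ a, ∑ a', (starRingEnd ℂ) (φ m a) * (φ m a' * ∑ c, ρ (a, c) (a', c)) := by
      simp only [expand]
      rw [Finset.sum_comm]
      refine Finset.sum_congr rfl fun a _ => ?_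
      rw [Finset.sum_comm]
      refine Finset.sum_congr rfl fun a' _ => ?_
      rw [Finset.mul_sum, Finset.mul_sum]
    rw [e1]
    have e2 : ∀ a a' : α, (starRingEnd ℂ) (φ m a) * (φ m a' * (ψ a * (starRingEnd ℂ) (ψ a')))
        = ((starRingEnd ℂ) (φ m a) * ψ a) * (φ m a' * (starRingEnd ℂ) (ψ a')) := by
      intro a a'; ring
    simp only [hmarg', e2, ← Finset.mul_sum, horth, mul_zero]
    simp
  -- hence ρ kills each v m c
  have hkill : ∀ m c, ρ *ᵥ (v m c) = 0 := by
    intro m c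
    rw [← (hρ.dotProduct_mulVec_zero_iff (v m c))]
    have hnn : ∀ c ∈ Finset.univ, (0 : ℂ) ≤ star (v m c) ⬝ᵥ ρ *ᵥ (v m c) :=
      fun c _ => hρ.dotProduct_mulVec_nonneg (v m c)
    exact (Finset.sum_eq_zero_iff_of_nonneg hnn).mp (hsum m) c (Finset.mem_univ c)
  -- key linear relation
  have K : ∀ (m : α) (c : γ) (n : α) (c' : γ),
      ρ (n, c') (m, c) = (starRingEnd ℂ) (ψ m) * ∑ a, ψ a * ρ (n, c') (a, c) := by
    intro m c n c'
    have h2 := congrFun (hkill m c) (n, c')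
    simp only [mulVec, dotProduct, Fintype.sum_prod_type, Pi.zero_apply, hv] at h2
    have h3 : ∑ a, ρ (n, c') (a, c) * φ m a = 0 := by
      rw [← h2]
      refine Finset.sum_congr rfl fun a _ => ?_
      rw [Fintype.sum_eq_single c (fun b hb => by simp [hb])]
      simp
    have h4 : ∀ a, ρ (n, c') (a, c) * φ m a
        = (if a = m then ρ (n, c') (a, c) else 0)
          - (starRingEnd ℂ) (ψ m) * (ψ a * ρ (n, c') (a, c)) := by
      intro a; simp only [hφ]; split <;> ring
    rw [Finset.sum_congr rfl fun a _ => h4 a, Finset.sum_sub_distrib,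
      Finset.sum_ite_eq' Finset.univ m, ← Finset.mul_sum, sub_eq_zero] at h3
    simpa using h3
  have herm : ∀ p q : α × γ, ρ p q = (starRingEnd ℂ) (ρ q p) := by
    intro p q
    simpa [Complex.star_def] using (hρ.1.apply p q).symm
  -- factorization with σ(c',c)
  have F : ∀ (n : α) (c' : γ) (m : α) (c : γ),
      ρ (n, c') (m, c) = (starRingEnd ℂ) (ψ m) * ψ n
        * ∑ a, ∑ b, ψ a * ((starRingEnd ℂ) (ψ b) * ρ (b, c') (a, c)) := by
    intro n c' m c
    have hB : ∀ a, ρ (n, c') (a, c)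
        = ψ n * ∑ b, (starRingEnd ℂ) (ψ b) * ρ (b, c') (a, c) := by
      intro a
      rw [herm (n, c') (a, c), K n c' a c, _root_.map_mul, map_sum, Complex.conj_conj]
      refine congrArg₂ _ rfl (Finset.sum_congr rfl fun b _ => ?_)
      rw [_root_.map_mul, herm (b, c') (a, c)]
    rw [K m c n c']
    simp only [hB, Finset.mul_sum]
    exact Finset.sum_congr rfl fun a _ => Finset.sum_congr rfl fun b _ => by ring
  intro m n c c'
  have hdiag : ∑ m', ρ (m', c) (m', c')
      = ∑ a, ∑ b, ψ a * ((starRingEnd ℂ) (ψ b) * ρ (b, c) (a, c')) := by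
    have h5 : ∀ m', ρ (m', c) (m', c')
        = (ψ m' * (starRingEnd ℂ) (ψ m'))
          * ∑ a, ∑ b, ψ a * ((starRingEnd ℂ) (ψ b) * ρ (b, c) (a, c')) := by
      intro m'
      rw [F m' c m' c']
      ring
    rw [Finset.sum_congr rfl fun m' _ => h5 m', ← Finset.sum_mul, hψ, one_mul]
  rw [hdiag, F m c n c']
  ring
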